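/- Let A ∈ ℂ^{n×n} be Hermitian and let V ∈ ℂ^{n×m} (m ≤ n) be semi-orthogonal, i.e. VᴴV = I_m. Then VᴴAV is Hermitian and for every index 1 ≤ i ≤ m, the i-th largest eigenvalue of VᴴAV is at most the i-th largest eigenvalue of A, i.e. λ_i(VᴴAV) ≤ λ_i(A). -/

import Mathlib

open Matrix

section Aux

variable {k l : ℕ}

/-- Extend a vector defined on a subtype of indices by zero. -/
def extL (p : Fin l → Prop) [DecidablePred p] :
    ({j : Fin l // p j} → ℂ) →ₗ[ℂ] (Fin l → ℂ) where
  toFun c j := if h : p j then c ⟨j, h⟩ else 0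
  map_add' c d := by funext j; by_cases h : p j <;> simp [h]
  map_smul' a c := by funext j; by_cases h : p j <;> simp [h]

lemma extL_injective (p : Fin l → Prop) [DecidablePred p] :
    Function.Injective (extL p) := by
  intro c d h
  funext j
  have := congrFun h j.1
  simpa [extL, j.2] using this

lemma extL_eq_zero {p : Fin l → Prop} [DecidablePred p]
    (c : {j : Fin l // p j} → ℂ) {j : Fin l} (h : ¬ p j) : extL p c j = 0 :=
  dif_neg h

lemma mulVecLin_inj (M : Matrix (Fin k) (Fin l) ℂ)
    (hM : Mᴴ * M = 1) : Function.Injective M.mulVecLin := by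
  intro c d h
  have h' : M *ᵥ c = M *ᵥ d := h
  have h2 : (Mᴴ * M) *ᵥ c = (Mᴴ * M) *ᵥ d := by
    rw [← Matrix.mulVec_mulVec, ← Matrix.mulVec_mulVec, h']
  simpa [hM] using h2

lemma quad (M : Matrix (Fin k) (Fin l) ℂ) (A : Matrix (Fin k) (Fin k) ℂ)
    (μ : Fin l → ℝ) (hM : Mᴴ * A * M = Matrix.diagonal (fun j => (μ j : ℂ)))
    (v : Fin l → ℂ) :
    star (M *ᵥ v) ⬝ᵥ (A *ᵥ (M *ᵥ v)) = ((∑ j, μ j * Complex.normSq (v j) : ℝ) : ℂ) := by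
  calc star (M *ᵥ v) ⬝ᵥ (A *ᵥ (M *ᵥ v))
      = (star v ᵥ* (Mᴴ * A * M)) ⬝ᵥ v := by
        rw [Matrix.star_mulVec, Matrix.mulVec_mulVec, Matrix.dotProduct_mulVec,
          Matrix.vecMul_vecMul, Matrix.mul_assoc]
    _ = ∑ j, star (v j) * (μ j : ℂ) * v j := by
        rw [hM]
        simp [dotProduct, Matrix.vecMul_diagonal]
    _ = ((∑ j, μ j * Complex.normSq (v j) : ℝ) : ℂ) := by
        push_cast
        refine Finset.sum_congr rfl fun j _ => ?_
        rw [← Complex.mul_conj (v j)]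
        simp only [Complex.star_def]
        ring

lemma normq (M : Matrix (Fin k) (Fin l) ℂ) (hM : Mᴴ * M = 1) (v : Fin l → ℂ) :
    star (M *ᵥ v) ⬝ᵥ (M *ᵥ v) = ((∑ j, Complex.normSq (v j) : ℝ) : ℂ) := by
  have h1 : Mᴴ * (1 : Matrix (Fin k) (Fin k) ℂ) * M
      = Matrix.diagonal (fun _ : Fin l => (((1 : ℝ)) : ℂ)) := by
    rw [Matrix.mul_one, hM]
    simp
  have := quad M 1 (fun _ => 1) h1 v
  simpa using this

lemma dotSelf (x : Fin k → ℂ) :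
    star x ⬝ᵥ x = ((∑ j, Complex.normSq (x j) : ℝ) : ℂ) := by
  push_cast
  refine Finset.sum_congr rfl fun j _ => ?_
  rw [← Complex.mul_conj (x j)]
  simp only [Pi.star_apply, Complex.star_def]
  ring

end Aux

/-- Let `A ∈ ℂ^{n×n}` be Hermitian and `V ∈ ℂ^{n×m}` (`m ≤ n`) semi-orthogonal
(`Vᴴ V = I`). Then `Vᴴ A V` is Hermitian, and its eigenvalues (listed decreasingly) are
dominated indexwise by those of `A`: `λ_i(VᴴAV) ≤ λ_i(A)` for `1 ≤ i ≤ m`.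
The decreasing eigenvalue sequences are pinned down by a unitary spectral decomposition
together with antitonicity. -/
theorem stmt_0 {n m : ℕ} (hmn : m ≤ n)
    (A : Matrix (Fin n) (Fin n) ℂ) (hA : A.IsHermitian)
    (V : Matrix (Fin n) (Fin m) ℂ) (hV : Vᴴ * V = 1)
    (μA : Fin n → ℝ) (hμA : Antitone μA)
    (UA : Matrix (Fin n) (Fin n) ℂ) (hUA : UAᴴ * UA = 1)
    (hdecA : A = UA * Matrix.diagonal (fun i => (μA i : ℂ)) * UAᴴ)
    (μB : Fin m → ℝ) (hμB : Antitone μB)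
    (UB : Matrix (Fin m) (Fin m) ℂ) (hUB : UBᴴ * UB = 1)
    (hdecB : Vᴴ * A * V = UB * Matrix.diagonal (fun i => (μB i : ℂ)) * UBᴴ) :
    (Vᴴ * A * V).IsHermitian ∧ ∀ i : Fin m, μB i ≤ μA (Fin.castLE hmn i) := by
  classical
  refine ⟨Matrix.isHermitian_conjTranspose_mul_mul V hA, fun i => ?_⟩
  set i' : Fin n := Fin.castLE hmn i with hi'
  -- diagonalizations
  have hUAA : UAᴴ * A * UA = Matrix.diagonal (fun j => (μA j : ℂ)) := by
    rw [hdecA]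
    calc UAᴴ * (UA * Matrix.diagonal (fun j => (μA j : ℂ)) * UAᴴ) * UA
        = (UAᴴ * UA) * Matrix.diagonal (fun j => (μA j : ℂ)) * (UAᴴ * UA) := by
          noncomm_ring
      _ = _ := by rw [hUA]; simp
  set W := V * UB with hWdef
  have hW : Wᴴ * W = 1 := by
    rw [hWdef, Matrix.conjTranspose_mul]
    calc UBᴴ * Vᴴ * (V * UB) = UBᴴ * (Vᴴ * V) * UB := by simp only [Matrix.mul_assoc]
      _ = 1 := by rw [hV, Matrix.mul_one, hUB]
  have hWAW : Wᴴ * A * W = Matrix.diagonal (fun j => (μB j : ℂ)) := by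
    rw [hWdef, Matrix.conjTranspose_mul]
    calc UBᴴ * Vᴴ * A * (V * UB) = UBᴴ * (Vᴴ * A * V) * UB := by simp only [Matrix.mul_assoc]
      _ = UBᴴ * (UB * Matrix.diagonal (fun j => (μB j : ℂ)) * UBᴴ) * UB := by rw [hdecB]
      _ = (UBᴴ * UB) * Matrix.diagonal (fun j => (μB j : ℂ)) * (UBᴴ * UB) := by noncomm_ring
      _ = _ := by rw [hUB]; simp
  -- the two subspaces
  set p1 : Fin m → Prop := fun j => j ≤ i with hp1
  set p2 : Fin n → Prop := fun j => i' ≤ j with hp2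
  set f1 := W.mulVecLin.comp (extL p1) with hf1def
  set f2 := UA.mulVecLin.comp (extL p2) with hf2def
  have hf1 : Function.Injective f1 := (mulVecLin_inj W hW).comp (extL_injective p1)
  have hf2 : Function.Injective f2 := (mulVecLin_inj UA hUA).comp (extL_injective p2)
  set S := LinearMap.range f1 with hSdef
  set T := LinearMap.range f2 with hTdef
  have hcard1 : Fintype.card {j : Fin m // p1 j} = (i : ℕ) + 1 := by
    rw [Fintype.card_congr
      (Equiv.subtypeEquivRight (fun j => Iff.rfl) : {j : Fin m // p1 j} ≃ Set.Iic i)]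
    rw [Fintype.card_Iic, Fin.card_Iic]
  have hcard2 : Fintype.card {j : Fin n // p2 j} = n - (i : ℕ) := by
    rw [Fintype.card_congr
      (Equiv.subtypeEquivRight (fun j => Iff.rfl) : {j : Fin n // p2 j} ≃ Set.Ici i')]
    rw [Fintype.card_Ici, Fin.card_Ici]; rfl
  have hr1 : Module.finrank ℂ S = (i : ℕ) + 1 := by
    rw [hSdef, LinearMap.finrank_range_of_inj hf1, Module.finrank_fintype_fun_eq_card, hcard1]
  have hr2 : Module.finrank ℂ T = n - (i : ℕ) := by
    rw [hTdef, LinearMap.finrank_range_of_inj hf2, Module.finrank_fintype_fun_eq_card, hcard2]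
  have hsup : Module.finrank ℂ ↥(S ⊔ T) ≤ n := by
    have h := Submodule.finrank_le (S ⊔ T)
    simpa [Module.finrank_fintype_fun_eq_card] using h
  have hinf : 0 < Module.finrank ℂ ↥(S ⊓ T) := by
    have h3 := Submodule.finrank_sup_add_finrank_inf_eq S T
    have hi : (i : ℕ) < n := lt_of_lt_of_le i.2 hmn
    omega
  obtain ⟨x, hxS, hxT, hx0⟩ : ∃ x, x ∈ S ∧ x ∈ T ∧ x ≠ 0 := by
    rw [Module.finrank_pos_iff] at hinf
    obtain ⟨⟨x, hx⟩, h0⟩ := exists_ne (0 : ↥(S ⊓ T))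
    refine ⟨x, hx.1, hx.2, fun hxe => h0 ?_⟩
    exact Subtype.ext hxe
  obtain ⟨c, hc⟩ := hxS
  obtain ⟨d, hd⟩ := hxT
  set c' := extL p1 c with hc'def
  set d' := extL p2 d with hd'def
  have hxc : x = W *ᵥ c' := by rw [← hc]; rfl
  have hxd : x = UA *ᵥ d' := by rw [← hd]; rfl
  -- quadratic form identities
  have hq1 : star x ⬝ᵥ (A *ᵥ x) = ((∑ j, μB j * Complex.normSq (c' j) : ℝ) : ℂ) := by
    rw [hxc]; exact quad W A μB hWAW c'
  have hq2 : star x ⬝ᵥ (A *ᵥ x) = ((∑ j, μA j * Complex.normSq (d' j) : ℝ) : ℂ) := by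
    rw [hxd]; exact quad UA A μA hUAA d'
  have hqr : (∑ j, μB j * Complex.normSq (c' j)) = ∑ j, μA j * Complex.normSq (d' j) := by
    exact_mod_cast hq1.symm.trans hq2
  have hn1 : star x ⬝ᵥ x = ((∑ j, Complex.normSq (c' j) : ℝ) : ℂ) := by
    rw [hxc]; exact normq W hW c'
  have hn2 : star x ⬝ᵥ x = ((∑ j, Complex.normSq (d' j) : ℝ) : ℂ) := by
    rw [hxd]; exact normq UA hUA d'
  have hs12 : (∑ j, Complex.normSq (c' j)) = ∑ j, Complex.normSq (d' j) := by
    exact_mod_cast hn1.symm.trans hn2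
  have hsx : (∑ j, Complex.normSq (x j)) = ∑ j, Complex.normSq (c' j) := by
    exact_mod_cast (dotSelf x).symm.trans hn1
  have hspos : 0 < ∑ j, Complex.normSq (c' j) := by
    rw [← hsx]
    obtain ⟨k, hk⟩ := Function.ne_iff.mp hx0
    refine Finset.sum_pos' (fun j _ => Complex.normSq_nonneg _)
      ⟨k, Finset.mem_univ k, Complex.normSq_pos.mpr hk⟩
  have hb1 : μB i * (∑ j, Complex.normSq (c' j)) ≤ ∑ j, μB j * Complex.normSq (c' j) := by
    rw [Finset.mul_sum]
    refine Finset.sum_le_sum fun j _ => ?_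
    by_cases h : p1 j
    · exact mul_le_mul_of_nonneg_right (hμB h) (Complex.normSq_nonneg _)
    · rw [hc'def, extL_eq_zero c h]; simp
  have hb2 : (∑ j, μA j * Complex.normSq (d' j)) ≤ μA i' * ∑ j, Complex.normSq (d' j) := by
    rw [Finset.mul_sum]
    refine Finset.sum_le_sum fun j _ => ?_
    by_cases h : p2 j
    · exact mul_le_mul_of_nonneg_right (hμA h) (Complex.normSq_nonneg _)
    · rw [hd'def, extL_eq_zero d h]; simp
  have hfinal : μB i * (∑ j, Complex.normSq (c' j)) ≤ μA i' * (∑ j, Complex.normSq (c' j)) := by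
    calc μB i * (∑ j, Complex.normSq (c' j)) ≤ ∑ j, μB j * Complex.normSq (c' j) := hb1
      _ = ∑ j, μA j * Complex.normSq (d' j) := hqr
      _ ≤ μA i' * ∑ j, Complex.normSq (d' j) := hb2
      _ = μA i' * ∑ j, Complex.normSq (c' j) := by rw [hs12]
  exact (mul_le_mul_iff_left₀ hspos).mp hfinal
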